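/- Let X be a Banach space and S = (X_k)_{k≥1} a representing system of subspaces with constant Θ̄_S = sup_{‖x‖≤1} Θ*_S(x) < ∞. If subspaces (X̃_k)_{k≥1} satisfy Σ_{k=1}^∞ ρ_0(X_k, X̃_k) < 1/(2Θ̄_S), then (X̃_k)_{k≥1} is also a representing system of subspaces in X. -/

import Mathlib

open Filter Finset
open scoped ENNReal

variable {E : Type*} [NormedAddCommGroup E] [NormedSpace ℝ E]

/-- For a finite tuple `P = (x_0, …, x_{n-1})` with `x_k ∈ X_k`,
`Θ_S(P) = max_k ‖x_0 + ⋯ + x_k‖` (as an extended nonnegative real). -/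
noncomputable def ThetaP (n : ℕ) (f : ℕ → E) : ℝ≥0∞ :=
  (Finset.range n).sup fun k => ENNReal.ofReal ‖∑ j ∈ Finset.range (k + 1), f j‖

/-- `Θ_S(x, ε) = inf {Θ_S(P) : ‖Σ(P) − x‖ ≤ ε}` (infimum over the empty set is `∞`). -/
noncomputable def Theta (X : ℕ → Submodule ℝ E) (x : E) (ε : ℝ) : ℝ≥0∞ :=
  ⨅ p : {p : ℕ × (ℕ → E) // (∀ k < p.1, p.2 k ∈ X k) ∧
      ‖(∑ j ∈ Finset.range p.1, p.2 j) - x‖ ≤ ε}, ThetaP p.1.1 p.1.2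

/-- `Θ*_S(x) = sup_{ε > 0} Θ_S(x, ε) = lim_{ε → 0+} Θ_S(x, ε)`. -/
noncomputable def ThetaStar (X : ℕ → Submodule ℝ E) (x : E) : ℝ≥0∞ :=
  ⨆ ε : {ε : ℝ // 0 < ε}, Theta X x ε

/-- `Θ̄_S = sup_{‖x‖ ≤ 1} Θ*_S(x)`. -/
noncomputable def ThetaBar (X : ℕ → Submodule ℝ E) : ℝ≥0∞ :=
  ⨆ x : {x : E // ‖x‖ ≤ 1}, ThetaStar X x

/-- `ρ_0(Y, Z) = sup {dist(y, Z) : y ∈ Y, ‖y‖ = 1}`. -/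
noncomputable def rho0 (Y Z : Submodule ℝ E) : ℝ :=
  sSup {d : ℝ | ∃ y ∈ Y, ‖y‖ = 1 ∧ d = Metric.infDist y (Z : Set E)}

lemma rho0_bdd (Y Z : Submodule ℝ E) :
    BddAbove {d : ℝ | ∃ y ∈ Y, ‖y‖ = 1 ∧ d = Metric.infDist y (Z : Set E)} := by
  refine ⟨1, ?_⟩
  rintro d ⟨y, hy, h1, rfl⟩
  calc Metric.infDist y (Z : Set E) ≤ dist y 0 := Metric.infDist_le_dist_of_mem Z.zero_mem
    _ = 1 := by rw [dist_zero_right, h1]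

lemma rho0_nonneg (Y Z : Submodule ℝ E) : 0 ≤ rho0 Y Z := by
  rcases Set.eq_empty_or_nonempty
      {d : ℝ | ∃ y ∈ Y, ‖y‖ = 1 ∧ d = Metric.infDist y (Z : Set E)} with h | h
  · rw [rho0, h, Real.sSup_empty]
  · obtain ⟨d, hd⟩ := h
    obtain ⟨y, hy, h1, rfl⟩ := hd
    exact le_trans Metric.infDist_nonneg (le_csSup (rho0_bdd Y Z) ⟨y, hy, h1, rfl⟩)

lemma approx_mem (Y Z : Submodule ℝ E) {y : E} (hy : y ∈ Y) {δ : ℝ} (hδ : 0 < δ) :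
    ∃ z ∈ Z, ‖y - z‖ ≤ rho0 Y Z * ‖y‖ + δ := by
  rcases eq_or_ne y 0 with rfl | hy0
  · refine ⟨0, Z.zero_mem, ?_⟩
    simp [hδ.le]
  · have hny : 0 < ‖y‖ := norm_pos_iff.mpr hy0
    set u := ‖y‖⁻¹ • y with hu_def
    have hu : ‖u‖ = 1 := by
      rw [hu_def, norm_smul, Real.norm_eq_abs, abs_of_pos (inv_pos.mpr hny),
        inv_mul_cancel₀ hny.ne']
    have humem : u ∈ Y := Y.smul_mem _ hy
    have h1 : Metric.infDist u (Z : Set E) ≤ rho0 Y Z :=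
      le_csSup (rho0_bdd Y Z) ⟨u, humem, hu, rfl⟩
    have h2 : Metric.infDist u (Z : Set E) < rho0 Y Z + δ / ‖y‖ :=
      lt_of_le_of_lt h1 (lt_add_of_pos_right _ (div_pos hδ hny))
    obtain ⟨z', hz', hdz⟩ := (Metric.infDist_lt_iff ⟨0, Z.zero_mem⟩).mp h2
    refine ⟨‖y‖ • z', Z.smul_mem _ hz', ?_⟩
    have hyz : y - ‖y‖ • z' = ‖y‖ • (u - z') := by
      rw [smul_sub, hu_def, smul_smul, mul_inv_cancel₀ hny.ne', one_smul]
    rw [hyz, norm_smul, Real.norm_eq_abs, abs_of_pos hny]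
    have hlt : ‖u - z'‖ < rho0 Y Z + δ / ‖y‖ := by rwa [dist_eq_norm] at hdz
    calc ‖y‖ * ‖u - z'‖ ≤ ‖y‖ * (rho0 Y Z + δ / ‖y‖) := by nlinarith [norm_nonneg (u - z')]
      _ = rho0 Y Z * ‖y‖ + δ := by field_simp

lemma lemA (X : ℕ → Submodule ℝ E) (hfin : ThetaBar X ≠ ⊤) (x : E) {δ : ℝ} (hδ : 0 < δ) :
    ∃ n, ∃ f : ℕ → E, (∀ k < n, f k ∈ X k) ∧ ‖(∑ j ∈ Finset.range n, f j) - x‖ ≤ δ ∧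
      ∀ m < n, ‖∑ j ∈ Finset.range (m + 1), f j‖ ≤ (ThetaBar X).toReal * ‖x‖ + δ := by
  rcases eq_or_ne x 0 with rfl | hx0
  · exact ⟨0, 0, by simp, by simpa using hδ.le, by simp⟩
  · have hnx : 0 < ‖x‖ := norm_pos_iff.mpr hx0
    set ε : ℝ := δ / ‖x‖ with hε_def
    have hε : 0 < ε := div_pos hδ hnx
    set u : E := ‖x‖⁻¹ • x with hu_def
    have hu : ‖u‖ = 1 := by
      rw [hu_def, norm_smul, Real.norm_eq_abs, abs_of_pos (inv_pos.mpr hnx),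
        inv_mul_cancel₀ hnx.ne']
    have h1 : Theta X u ε ≤ ThetaBar X := by
      refine le_trans ?_ (le_iSup (fun z : {x : E // ‖x‖ ≤ 1} => ThetaStar X z) ⟨u, hu.le⟩)
      exact le_iSup (fun e : {ε : ℝ // 0 < ε} => Theta X u e) ⟨ε, hε⟩
    have h2 : Theta X u ε < ThetaBar X + ENNReal.ofReal ε :=
      lt_of_le_of_lt h1 (ENNReal.lt_add_right hfin (by simp [ENNReal.ofReal_eq_zero]; linarith))
    obtain ⟨⟨⟨n, g⟩, hmem, herr⟩, hθ⟩ := iInf_lt_iff.mp h2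
    simp only at hθ hmem herr
    have htop : ThetaBar X + ENNReal.ofReal ε ≠ ⊤ :=
      ENNReal.add_ne_top.mpr ⟨hfin, ENNReal.ofReal_ne_top⟩
    have hpart : ∀ m < n, ‖∑ j ∈ Finset.range (m + 1), g j‖ ≤ (ThetaBar X).toReal + ε := by
      intro m hm
      have hle : ENNReal.ofReal ‖∑ j ∈ Finset.range (m + 1), g j‖ < ThetaBar X + ENNReal.ofReal ε :=
        lt_of_le_of_lt (Finset.le_sup (f := fun k => ENNReal.ofReal ‖∑ j ∈ Finset.range (k + 1), g j‖)
          (Finset.mem_range.mpr hm)) hθ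
      have := (ENNReal.ofReal_lt_iff_lt_toReal (norm_nonneg _) htop).mp hle
      rw [ENNReal.toReal_add hfin ENNReal.ofReal_ne_top, ENNReal.toReal_ofReal hε.le] at this
      exact this.le
    refine ⟨n, fun k => ‖x‖ • g k, fun k hk => (X k).smul_mem _ (hmem k hk), ?_, ?_⟩
    · have hsum : (∑ j ∈ Finset.range n, ‖x‖ • g j) - x = ‖x‖ • ((∑ j ∈ Finset.range n, g j) - u) := by
        rw [smul_sub, ← Finset.smul_sum, hu_def, smul_smul, mul_inv_cancel₀ hnx.ne', one_smul]
      rw [hsum, norm_smul, Real.norm_eq_abs, abs_of_pos hnx]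
      calc ‖x‖ * ‖(∑ j ∈ Finset.range n, g j) - u‖ ≤ ‖x‖ * ε := by nlinarith
        _ = δ := by rw [hε_def]; field_simp
    · intro m hm
      rw [← Finset.smul_sum, norm_smul, Real.norm_eq_abs, abs_of_pos hnx]
      have := hpart m hm
      calc ‖x‖ * ‖∑ j ∈ Finset.range (m + 1), g j‖ ≤ ‖x‖ * ((ThetaBar X).toReal + ε) := by nlinarith
        _ = (ThetaBar X).toReal * ‖x‖ + δ := by rw [hε_def]; field_simp

lemma norm_le_add_sub' (a b : E) : ‖b‖ ≤ ‖a‖ + ‖a - b‖ := by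
  calc ‖b‖ = ‖a - (a - b)‖ := by rw [sub_sub_cancel]
    _ ≤ ‖a‖ + ‖a - b‖ := norm_sub_le _ _

lemma lemC (X Xt : ℕ → Submodule ℝ E) (hfin : ThetaBar X ≠ ⊤)
    (hsum : Summable fun k => rho0 (X k) (Xt k))
    {q C : ℝ}
    (hq : 2 * (ThetaBar X).toReal * (∑' k, rho0 (X k) (Xt k)) < q) (hq1 : q < 1)
    (hC : (ThetaBar X).toReal * (1 + 2 * (∑' k, rho0 (X k) (Xt k))) + 1 ≤ C)
    (x : E) :
    ∃ n, ∃ g : ℕ → E, (∀ k, g k ∈ Xt k) ∧ (∀ k, n ≤ k → g k = 0) ∧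
      ‖(∑ j ∈ Finset.range n, g j) - x‖ ≤ q * ‖x‖ ∧
      ∀ m, ‖∑ j ∈ Finset.range m, g j‖ ≤ C * ‖x‖ := by
  set Tr := (ThetaBar X).toReal with hTr_def
  set ρ := ∑' k, rho0 (X k) (Xt k) with hρ_def
  have hTr0 : 0 ≤ Tr := ENNReal.toReal_nonneg
  have hρ0 : 0 ≤ ρ := tsum_nonneg fun k => rho0_nonneg _ _
  have hC0 : 0 < C := lt_of_lt_of_le (by positivity) hC
  rcases eq_or_ne x 0 with rfl | hx0
  · exact ⟨0, 0, fun k => (Xt k).zero_mem, fun k _ => rfl, by simp, by simp [hC0.le]⟩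
  have hnx : 0 < ‖x‖ := norm_pos_iff.mpr hx0
  set δ : ℝ := (q - 2 * Tr * ρ) / (2 * ρ + 2) * ‖x‖ with hδ_def
  have hδ : 0 < δ := by
    apply mul_pos (div_pos (by linarith) (by linarith)) hnx
  have hδkey : δ * (2 * ρ + 2) = (q - 2 * Tr * ρ) * ‖x‖ := by
    rw [hδ_def]; field_simp
  obtain ⟨n, f, hmem, herr, hpart⟩ := lemA X hfin x hδ
  set M : ℝ := Tr * ‖x‖ + δ with hM_def
  have hM0 : 0 < M := by positivity
  have hpart' : ∀ m ≤ n, ‖∑ j ∈ Finset.range m, f j‖ ≤ M := by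
    intro m hm
    cases m with
    | zero => simpa using hM0.le
    | succ m' => exact hpart m' (by omega)
  have hfk : ∀ k < n, ‖f k‖ ≤ 2 * M := by
    intro k hk
    have h1 : f k = (∑ j ∈ Finset.range (k + 1), f j) - ∑ j ∈ Finset.range k, f j := by
      rw [Finset.sum_range_succ]; abel
    rw [h1]
    have := hpart' (k + 1) (by omega)
    have := hpart' k (by omega)
    calc ‖(∑ j ∈ Finset.range (k + 1), f j) - ∑ j ∈ Finset.range k, f j‖
        ≤ ‖∑ j ∈ Finset.range (k + 1), f j‖ + ‖∑ j ∈ Finset.range k, f j‖ := norm_sub_le _ _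
      _ ≤ 2 * M := by linarith
  -- choose approximants
  have hgex : ∀ k, ∃ z, z ∈ Xt k ∧ (k < n →
      ‖f k - z‖ ≤ rho0 (X k) (Xt k) * (2 * M) + δ * (1 / 2) ^ (k + 1)) := by
    intro k
    by_cases hk : k < n
    · obtain ⟨z, hz, hle⟩ := approx_mem (X k) (Xt k) (hmem k hk) (δ := δ * (1 / 2) ^ (k + 1))
        (by positivity)
      refine ⟨z, hz, fun _ => hle.trans ?_⟩
      have := rho0_nonneg (X k) (Xt k)
      have := hfk k hk
      nlinarith
    · exact ⟨0, (Xt k).zero_mem, fun h => absurd h hk⟩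
  choose z hz1 hz2 using hgex
  set g : ℕ → E := fun k => if k < n then z k else 0 with hg_def
  have hgmem : ∀ k, g k ∈ Xt k := by
    intro k; rw [hg_def]; dsimp only
    split
    · exact hz1 k
    · exact (Xt k).zero_mem
  have hgzero : ∀ k, n ≤ k → g k = 0 := by
    intro k hk; rw [hg_def]; simp [Nat.not_lt.mpr hk]
  -- bound on partial sums of ρ
  have hρsum : ∀ m, ∑ k ∈ Finset.range m, rho0 (X k) (Xt k) ≤ ρ := by
    intro m
    exact Summable.sum_le_tsum (Finset.range m) (fun k _ => rho0_nonneg _ _) hsum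
  have hhalf : ∀ m, ∑ k ∈ Finset.range m, δ * (1 / 2 : ℝ) ^ (k + 1) ≤ δ := by
    intro m
    have hs : Summable fun k : ℕ => δ * (1 / 2 : ℝ) ^ (k + 1) := by
      have h0 : Summable fun k : ℕ => (1 / 2 : ℝ) ^ (k + 1) :=
        (summable_geometric_of_lt_one (by norm_num) (by norm_num)).comp_injective
          (add_left_injective 1)
      exact h0.mul_left δ
    have h1 : ∑ k ∈ Finset.range m, δ * (1 / 2 : ℝ) ^ (k + 1)
        ≤ ∑' k, δ * (1 / 2 : ℝ) ^ (k + 1) :=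
      Summable.sum_le_tsum (Finset.range m) (fun k _ => by positivity) hs
    have h2 : ∑' k : ℕ, δ * (1 / 2 : ℝ) ^ (k + 1) = δ := by
      have : ∀ k : ℕ, δ * (1 / 2 : ℝ) ^ (k + 1) = (δ / 2) * (1 / 2 : ℝ) ^ k := by
        intro k; ring
      rw [tsum_congr this, tsum_mul_left, tsum_geometric_of_lt_one (by norm_num) (by norm_num)]
      norm_num
    linarith
  -- difference of partial sums
  have hdiff : ∀ m ≤ n, ‖(∑ j ∈ Finset.range m, f j) - ∑ j ∈ Finset.range m, g j‖
      ≤ 2 * M * ρ + δ := by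
    intro m hm
    rw [← Finset.sum_sub_distrib]
    calc ‖∑ j ∈ Finset.range m, (f j - g j)‖ ≤ ∑ j ∈ Finset.range m, ‖f j - g j‖ :=
        norm_sum_le _ _
      _ ≤ ∑ j ∈ Finset.range m, (rho0 (X j) (Xt j) * (2 * M) + δ * (1 / 2) ^ (j + 1)) := by
        apply Finset.sum_le_sum
        intro j hj
        have hjn : j < n := lt_of_lt_of_le (Finset.mem_range.mp hj) hm
        have : g j = z j := by rw [hg_def]; simp [hjn]
        rw [this]
        exact hz2 j hjn
      _ = (∑ j ∈ Finset.range m, rho0 (X j) (Xt j)) * (2 * M)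
          + ∑ j ∈ Finset.range m, δ * (1 / 2) ^ (j + 1) := by
        rw [Finset.sum_add_distrib, Finset.sum_mul]
      _ ≤ 2 * M * ρ + δ := by
        have := hρsum m
        have := hhalf m
        nlinarith [hρsum m, hhalf m, hM0]
  refine ⟨n, g, hgmem, hgzero, ?_, ?_⟩
  · calc ‖(∑ j ∈ Finset.range n, g j) - x‖
        ≤ ‖(∑ j ∈ Finset.range n, g j) - ∑ j ∈ Finset.range n, f j‖
          + ‖(∑ j ∈ Finset.range n, f j) - x‖ := norm_sub_le_norm_sub_add_norm_sub _ _ _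
      _ ≤ (2 * M * ρ + δ) + δ := by
        have h1 := hdiff n le_rfl
        rw [norm_sub_rev]
        linarith
      _ ≤ q * ‖x‖ := by
        rw [hM_def]
        nlinarith [hδkey]
  · intro m
    by_cases hm : m ≤ n
    · calc ‖∑ j ∈ Finset.range m, g j‖
          ≤ ‖∑ j ∈ Finset.range m, f j‖
            + ‖(∑ j ∈ Finset.range m, f j) - ∑ j ∈ Finset.range m, g j‖ :=
          norm_le_add_sub' _ _
        _ ≤ M + (2 * M * ρ + δ) := add_le_add (hpart' m hm) (hdiff m hm)
        _ ≤ C * ‖x‖ := by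
          have hqle : (q - 2 * Tr * ρ) * ‖x‖ ≤ ‖x‖ := by
            have h1 : 0 ≤ Tr * ρ := mul_nonneg hTr0 hρ0
            calc (q - 2 * Tr * ρ) * ‖x‖ ≤ 1 * ‖x‖ :=
                  mul_le_mul_of_nonneg_right (by linarith) hnx.le
              _ = ‖x‖ := one_mul _
          rw [hM_def]
          nlinarith [hδkey]
    · have : ∑ j ∈ Finset.range m, g j = ∑ j ∈ Finset.range n, g j := by
        symm
        apply Finset.sum_subset (Finset.range_subset_range.mpr (by omega))
        intro k _ hk
        exact hgzero k (by simpa using hk)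
      rw [this]
      calc ‖∑ j ∈ Finset.range n, g j‖
          ≤ ‖∑ j ∈ Finset.range n, f j‖
            + ‖(∑ j ∈ Finset.range n, f j) - ∑ j ∈ Finset.range n, g j‖ :=
          norm_le_add_sub' _ _
        _ ≤ M + (2 * M * ρ + δ) := add_le_add (hpart' n le_rfl) (hdiff n le_rfl)
        _ ≤ C * ‖x‖ := by
          have hqle : (q - 2 * Tr * ρ) * ‖x‖ ≤ ‖x‖ := by
            have h1 : 0 ≤ Tr * ρ := mul_nonneg hTr0 hρ0
            calc (q - 2 * Tr * ρ) * ‖x‖ ≤ 1 * ‖x‖ :=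
                  mul_le_mul_of_nonneg_right (by linarith) hnx.le
              _ = ‖x‖ := one_mul _
          rw [hM_def]
          nlinarith [hδkey]

/-- Stability of representing systems of subspaces: if `S = (X_k)` is a representing
system of subspaces with `Θ̄_S < ∞` and `Σ_k ρ_0(X_k, X̃_k) < 1/(2 Θ̄_S)`, then
`(X̃_k)` is also a representing system of subspaces in `X`. -/
theorem rss_stability [CompleteSpace E] (X Xt : ℕ → Submodule ℝ E)
    (hX : ∀ k, IsClosed (X k : Set E)) (hXt : ∀ k, IsClosed (Xt k : Set E))
    (hS : ∀ x : E, ∃ f : ℕ → E, (∀ k, f k ∈ X k) ∧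
      Tendsto (fun n => ∑ k ∈ Finset.range n, f k) atTop (nhds x))
    (hfin : ThetaBar X ≠ ⊤)
    (hsum : Summable fun k => rho0 (X k) (Xt k))
    (hlt : ENNReal.ofReal (∑' k, rho0 (X k) (Xt k)) < (2 * ThetaBar X)⁻¹) :
    ∀ x : E, ∃ f : ℕ → E, (∀ k, f k ∈ Xt k) ∧
      Tendsto (fun n => ∑ k ∈ Finset.range n, f k) atTop (nhds x) := by
  intro x
  set Tr := (ThetaBar X).toReal with hTr_def
  set ρ := ∑' k, rho0 (X k) (Xt k) with hρ_def
  have hρ0 : 0 ≤ ρ := tsum_nonneg fun k => rho0_nonneg _ _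
  have hTr0 : 0 ≤ Tr := ENNReal.toReal_nonneg
  have hkey : 2 * Tr * ρ < 1 := by
    rcases eq_or_ne (ThetaBar X) 0 with h0 | h0
    · rw [hTr_def, h0]
      simp
    · have hTrpos : 0 < Tr := ENNReal.toReal_pos h0 hfin
      have h2T : (2 : ℝ≥0∞) * ThetaBar X = ENNReal.ofReal (2 * Tr) := by
        rw [ENNReal.ofReal_mul (by norm_num), ENNReal.ofReal_ofNat,
          hTr_def, ENNReal.ofReal_toReal hfin]
      have hinv : (2 * ThetaBar X)⁻¹ = ENNReal.ofReal ((2 * Tr)⁻¹) := by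
        rw [h2T, ← ENNReal.ofReal_inv_of_pos (by positivity)]
      rw [hinv] at hlt
      have hρlt : ρ < (2 * Tr)⁻¹ := by
        have := (ENNReal.ofReal_lt_ofReal_iff (by positivity)).mp hlt
        exact this
      calc 2 * Tr * ρ < 2 * Tr * (2 * Tr)⁻¹ := by
            exact mul_lt_mul_of_pos_left hρlt (by positivity)
        _ = 1 := mul_inv_cancel₀ (by positivity)
  set q : ℝ := (1 + 2 * Tr * ρ) / 2 with hq_def
  have h2Trρ : 0 ≤ 2 * Tr * ρ := by positivity
  have hq : 2 * Tr * ρ < q := by rw [hq_def]; linarith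
  have hq1 : q < 1 := by rw [hq_def]; linarith
  have hq0 : 0 ≤ q := by rw [hq_def]; linarith
  set C : ℝ := Tr * (1 + 2 * ρ) + 1 with hC_def
  have hC0 : 0 < C := by positivity
  choose nn gg hg1 hg0 hg2 hg3 using fun y : E =>
    lemC X Xt hfin hsum hq hq1 hC_def.ge y
  -- the iteration
  let r : ℕ → E := fun i =>
    Nat.rec x (fun _ y => y - ∑ j ∈ Finset.range (nn y), gg y j) i
  have hrs : ∀ i, r (i + 1) = r i - ∑ j ∈ Finset.range (nn (r i)), gg (r i) j :=
    fun i => rfl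
  have hr_norm : ∀ i, ‖r i‖ ≤ q ^ i * ‖x‖ := by
    intro i
    induction i with
    | zero => simp [r]
    | succ i ih =>
      have h1 : ‖r (i + 1)‖ ≤ q * ‖r i‖ := by
        rw [hrs i, norm_sub_rev]
        exact hg2 (r i)
      calc ‖r (i + 1)‖ ≤ q * ‖r i‖ := h1
        _ ≤ q * (q ^ i * ‖x‖) := mul_le_mul_of_nonneg_left ih hq0
        _ = q ^ (i + 1) * ‖x‖ := by ring
  have hGbound : ∀ i m, ‖∑ k ∈ Finset.range m, gg (r i) k‖ ≤ C * ‖x‖ * q ^ i := by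
    intro i m
    calc ‖∑ k ∈ Finset.range m, gg (r i) k‖ ≤ C * ‖r i‖ := hg3 (r i) m
      _ ≤ C * (q ^ i * ‖x‖) := mul_le_mul_of_nonneg_left (hr_norm i) hC0.le
      _ = C * ‖x‖ * q ^ i := by ring
  have hGk : ∀ i k, ‖gg (r i) k‖ ≤ 2 * C * ‖x‖ * q ^ i := by
    intro i k
    have h1 : gg (r i) k = (∑ j ∈ Finset.range (k + 1), gg (r i) j)
        - ∑ j ∈ Finset.range k, gg (r i) j := by
      rw [Finset.sum_range_succ]; abel
    rw [h1]
    calc ‖(∑ j ∈ Finset.range (k + 1), gg (r i) j) - ∑ j ∈ Finset.range k, gg (r i) j‖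
        ≤ ‖∑ j ∈ Finset.range (k + 1), gg (r i) j‖ + ‖∑ j ∈ Finset.range k, gg (r i) j‖ :=
        norm_sub_le _ _
      _ ≤ 2 * C * ‖x‖ * q ^ i := by
        have := hGbound i (k + 1)
        have := hGbound i k
        linarith
  have hgeom : Summable fun i : ℕ => q ^ i := summable_geometric_of_lt_one hq0 hq1
  have hsummable : ∀ k, Summable fun i => gg (r i) k := by
    intro k
    apply Summable.of_norm_bounded (hgeom.mul_left (2 * C * ‖x‖))
    intro i
    exact hGk i k
  refine ⟨fun k => ∑' i, gg (r i) k, ?_, ?_⟩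
  · intro k
    have ht := (hsummable k).hasSum.tendsto_sum_nat
    exact (hXt k).mem_of_tendsto ht (Filter.Eventually.of_forall fun I =>
      Submodule.sum_mem _ fun i _ => hg1 (r i) k)
  · -- convergence of partial sums to x
    have hSb : ∀ i, ‖r i - r (i + 1)‖ ≤ C * ‖x‖ * q ^ i := by
      intro i
      rw [hrs i, sub_sub_cancel]
      exact hGbound i (nn (r i))
    have hSsum : Summable fun i => r i - r (i + 1) :=
      Summable.of_norm_bounded (hgeom.mul_left (C * ‖x‖)) hSb
    have hr_tendsto : Tendsto (fun I => r I) atTop (nhds 0) := by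
      apply squeeze_zero_norm hr_norm
      have := (tendsto_pow_atTop_nhds_zero_of_lt_one hq0 hq1).mul_const ‖x‖
      simpa using this
    have hx_sum : Tendsto (fun I => ∑ i ∈ Finset.range I, (r i - r (i + 1))) atTop (nhds x) := by
      have htel : ∀ I, ∑ i ∈ Finset.range I, (r i - r (i + 1)) = x - r I := by
        intro I
        rw [Finset.sum_range_sub' r]
        rfl
      simp only [htel]
      have := tendsto_const_nhds (x := x) (f := atTop (α := ℕ)) |>.sub hr_tendsto
      simpa using this
    have htsumS : ∑' i, (r i - r (i + 1)) = x :=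
      tendsto_nhds_unique hSsum.hasSum.tendsto_sum_nat hx_sum
    have hGtend : ∀ i, Tendsto (fun m => ∑ k ∈ Finset.range m, gg (r i) k) atTop
        (nhds (r i - r (i + 1))) := by
      intro i
      have heq : ∀ m ≥ nn (r i), ∑ k ∈ Finset.range m, gg (r i) k
          = r i - r (i + 1) := by
        intro m hm
        rw [hrs i, sub_sub_cancel]
        symm
        apply Finset.sum_subset (Finset.range_subset_range.mpr hm)
        intro k _ hk
        exact hg0 (r i) k (by simpa using hk)
      exact tendsto_atTop_of_eventually_const heq
    have hmain : Tendsto (fun m => ∑' i, ∑ k ∈ Finset.range m, gg (r i) k) atTop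
        (nhds (∑' i, (r i - r (i + 1)))) := by
      apply tendsto_tsum_of_dominated_convergence (bound := fun i => C * ‖x‖ * q ^ i)
        (hgeom.mul_left _) hGtend
      exact Filter.Eventually.of_forall fun m i => hGbound i m
    rw [htsumS] at hmain
    have hfun : (fun m => ∑ k ∈ Finset.range m, ∑' i, gg (r i) k)
        = fun m => ∑' i, ∑ k ∈ Finset.range m, gg (r i) k := by
      funext m
      exact (Summable.tsum_finsetSum fun k _ => hsummable k).symm
    rw [hfun]
    exact hmain
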